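/- For every finite tree T of pathwidth k and every vertex u ∈ V(T), there is a path-partition of T of height at most 2k in which u belongs to the root-path. -/

import Mathlib

/-- `p 0, p 1, …, p m` is a simple path in `G` (injective, consecutive vertices adjacent). -/
def IsPathSeq {V : Type} (G : SimpleGraph V) (p : ℕ → V) (m : ℕ) : Prop :=
  (∀ i j, i ≤ m → j ≤ m → p i = p j → i = j) ∧ ∀ i < m, G.Adj (p i) (p (i + 1))

/-- A vertex coloring `φ` of `G` is nonrepetitive if there is no simple path
`v₁ v₂ … v₂ᵣ` (`r ≥ 1`) in `G` with `φ(vᵢ) = φ(v_{r+i})` for all `i ∈ {1,…,r}`. -/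
def Nonrepetitive {V : Type} (G : SimpleGraph V) (φ : V → ℕ) : Prop :=
  ∀ r : ℕ, 1 ≤ r → ∀ p : ℕ → V, IsPathSeq G p (2 * r - 1) →
    ∃ i < r, φ (p i) ≠ φ (p (i + r))

/-- `G` is nonrepetitively `ℓ`-choosable: every assignment of color lists of size
at least `ℓ` admits a nonrepetitive coloring from the lists. -/
def ThueChoosable {V : Type} (G : SimpleGraph V) (ℓ : ℕ) : Prop :=
  ∀ L : V → Finset ℕ, (∀ v, ℓ ≤ (L v).card) →
    ∃ φ : V → ℕ, (∀ v, φ v ∈ L v) ∧ Nonrepetitive G φ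

/-- `B 0, …, B (m-1)` is a path decomposition of `G`: every vertex appears in some bag,
the bags containing a given vertex form an interval of indices, and each edge lies in a bag. -/
def IsPathDecomp {V : Type} (G : SimpleGraph V) {m : ℕ} (B : Fin m → Finset V) : Prop :=
  (∀ v, ∃ i, v ∈ B i) ∧
  (∀ v, ∀ i j k : Fin m, i ≤ j → j ≤ k → v ∈ B i → v ∈ B k → v ∈ B j) ∧
  (∀ u v, G.Adj u v → ∃ i, u ∈ B i ∧ v ∈ B i)

/-- `G` has a path decomposition of width at most `k`. -/
def PathwidthLE {V : Type} (G : SimpleGraph V) (k : ℕ) : Prop :=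
  ∃ (m : ℕ) (B : Fin m → Finset V), IsPathDecomp G B ∧ ∀ i, (B i).card ≤ k + 1

/-- The pathwidth of `G`: the least width of a path decomposition of `G`. -/
noncomputable def pathwidth {V : Type} (G : SimpleGraph V) : ℕ :=
  sInf {k | PathwidthLE G k}

/-- A path-partition of a tree `T`: a rooted tree `Q` (on index type `ι`) together with
a collection `P x` (`x : ι`) of vertex-disjoint paths of `T` partitioning `V(T)`, such
that `x y` is an edge of `Q` iff some edge of `T` joins a vertex of `P x` to a vertex
of `P y`. -/
structure PathPartition {V : Type} (T : SimpleGraph V) (ι : Type) where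
  Q : SimpleGraph ι
  root : ι
  isTree : Q.IsTree
  P : ι → Set V
  disjoint : ∀ x y, x ≠ y → Disjoint (P x) (P y)
  cover : ∀ v, ∃ x, v ∈ P x
  isPath : ∀ x, ∃ (m : ℕ) (f : ℕ → V), IsPathSeq T f m ∧ P x = {v | ∃ i ≤ m, f i = v}
  adj_iff : ∀ x y, Q.Adj x y ↔ x ≠ y ∧ ∃ u ∈ P x, ∃ w ∈ P y, T.Adj u w

/-- The level of a vertex `v` of `T`: the height in the rooted tree `Q` (distance from
the root) of the index `x` with `v ∈ P x`. -/
noncomputable def PathPartition.level {V ι : Type} {T : SimpleGraph V}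
    (PP : PathPartition T ι) (v : V) : ℕ :=
  PP.Q.dist PP.root (Classical.choose (PP.cover v))

/-- The minimum level of a vertex on the path `f 0, …, f m` of `T`; the base of
the path consists of its vertices of this level. -/
noncomputable def PathPartition.minLevel {V ι : Type} {T : SimpleGraph V}
    (PP : PathPartition T ι) (f : ℕ → V) (m : ℕ) : ℕ :=
  sInf {l | ∃ i ≤ m, PP.level (f i) = l}

/-- Every ascending path of `T` is `φ`-good: for every simple path `f 0, …, f m`
whose first vertex lies in its base (i.e. an ascending path enumerated from its source)
and every way of reading its color sequence as a near repetition
`x₁…x_r y₁…y_g x₁…x_r` (`r ≥ 1`, `m + 1 = 2r + g`), strictly more than `r` of the `g`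
gap vertices `f r, …, f (r+g-1)` lie in the base of the path. -/
def PathPartition.AscGood {V ι : Type} {T : SimpleGraph V}
    (PP : PathPartition T ι) (φ : V → ℕ) : Prop :=
  ∀ (m : ℕ) (f : ℕ → V), IsPathSeq T f m →
    PP.level (f 0) = PP.minLevel f m →
    ∀ r g : ℕ, 1 ≤ r → m + 1 = 2 * r + g →
      (∀ i < r, φ (f i) = φ (f (r + g + i))) →
      r < {i : ℕ | r ≤ i ∧ i < r + g ∧ PP.level (f i) = PP.minLevel f m}.ncard


namespace Stmt6
open SimpleGraph


/-- ascending crossing lemma -/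
lemma cross_up (F L : ℕ → ℕ) (M j : ℕ) (ov : ∀ i, i < M → F (i+1) ≤ L i) :
    ∀ d a, a + d ≤ M → F a ≤ j → j ≤ L (a + d) →
    ∃ i, a ≤ i ∧ i ≤ a + d ∧ F i ≤ j ∧ j ≤ L i := by
  intro d
  induction d with
  | zero => intro a _ h1 h2; exact ⟨a, le_refl a, by omega, h1, h2⟩
  | succ d ih =>
    intro a hM h1 h2
    by_cases hja : j ≤ L a
    · exact ⟨a, le_refl a, by omega, h1, hja⟩
    · have hF : F (a+1) ≤ j := le_trans (ov a (by omega)) (by omega)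
      obtain ⟨i, hi1, hi2, hi3, hi4⟩ := ih (a+1) (by omega) hF (by
        have : a + 1 + d = a + (d+1) := by omega
        rw [this]; exact h2)
      exact ⟨i, by omega, by omega, hi3, hi4⟩

lemma cross_down (F L : ℕ → ℕ) (M j : ℕ) (ov : ∀ i, i < M → F i ≤ L (i+1)) :
    ∀ d a, a + d ≤ M → F (a + d) ≤ j → j ≤ L a →
    ∃ i, a ≤ i ∧ i ≤ a + d ∧ F i ≤ j ∧ j ≤ L i := by
  intro d
  induction d with
  | zero => intro a _ h1 h2; exact ⟨a, le_refl a, by omega, h1, h2⟩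
  | succ d ih =>
    intro a hM h1 h2
    by_cases hja : F a ≤ j
    · exact ⟨a, le_refl a, by omega, hja, h2⟩
    · have hL : j ≤ L (a+1) := le_trans (by omega) (ov a (by omega))
      obtain ⟨i, hi1, hi2, hi3, hi4⟩ := ih (a+1) (by omega) (by
        have : a + 1 + d = a + (d+1) := by omega
        rw [this]; exact h1) hL
      exact ⟨i, by omega, by omega, hi3, hi4⟩

/-- crossing for arbitrary positions -/
lemma cross_any (F L : ℕ → ℕ) (M j : ℕ)
    (ov1 : ∀ i, i < M → F (i+1) ≤ L i) (ov2 : ∀ i, i < M → F i ≤ L (i+1))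
    (a b : ℕ) (ha : a ≤ M) (hb : b ≤ M) (h1 : F a ≤ j) (h2 : j ≤ L b) :
    ∃ i ≤ M, F i ≤ j ∧ j ≤ L i := by
  rcases le_total a b with h | h
  · obtain ⟨i, _, hi2, hi3, hi4⟩ := cross_up F L M j ov1 (b - a) a (by omega) h1
      (by rwa [show a + (b-a) = b by omega])
    exact ⟨i, by omega, hi3, hi4⟩
  · obtain ⟨i, _, hi2, hi3, hi4⟩ := cross_down F L M j ov2 (a - b) b (by omega)
      (by rwa [show b + (a-b) = a by omega]) h2
    exact ⟨i, by omega, hi3, hi4⟩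

variable {V : Type} {G : SimpleGraph V}

lemma getVert_inj {a b : V} (p : G.Walk a b) (hp : p.IsPath) :
    ∀ i j, i ≤ p.length → j ≤ p.length → p.getVert i = p.getVert j → i = j := by
  induction p with
  | nil => intro i j hi hj _; simp at hi hj; omega
  | @cons u v w h q ih =>
    rw [SimpleGraph.Walk.cons_isPath_iff] at hp
    intro i j hi hj heq
    match i, j with
    | 0, 0 => rfl
    | 0, (j+1) =>
      exfalso
      apply hp.2
      rw [SimpleGraph.Walk.mem_support_iff_exists_getVert]
      refine ⟨j, ?_, ?_⟩
      · simp only [SimpleGraph.Walk.getVert_zero] at heq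
        rw [SimpleGraph.Walk.getVert_cons_succ] at heq
        exact heq.symm
      · simp [SimpleGraph.Walk.length_cons] at hj; omega
    | (i+1), 0 =>
      exfalso
      apply hp.2
      rw [SimpleGraph.Walk.mem_support_iff_exists_getVert]
      refine ⟨i, ?_, ?_⟩
      · simp only [SimpleGraph.Walk.getVert_zero] at heq
        rw [SimpleGraph.Walk.getVert_cons_succ] at heq
        exact heq
      · simp [SimpleGraph.Walk.length_cons] at hi; omega
    | (i+1), (j+1) =>
      have := ih hp.1 i j (by simp [SimpleGraph.Walk.length_cons] at hi; omega)
        (by simp [SimpleGraph.Walk.length_cons] at hj; omega)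
        (by rwa [SimpleGraph.Walk.getVert_cons_succ, SimpleGraph.Walk.getVert_cons_succ] at heq)
      omega

/-- a path gives an `IsPathSeq` -/
lemma isPathSeq_of_path {a b : V} (p : G.Walk a b) (hp : p.IsPath) :
    IsPathSeq G p.getVert p.length :=
  ⟨getVert_inj p hp, fun i hi => p.adj_getVert_succ hi⟩

/-- walk along a seq with controlled support -/
lemma walk_along (f : ℕ → V) (m : ℕ) (hadj : ∀ i < m, G.Adj (f i) (f (i+1))) :
    ∀ d i, i + d ≤ m → ∃ w : G.Walk (f i) (f (i + d)),
      ∀ z ∈ w.support, ∃ j ≤ m, f j = z := by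
  intro d
  induction d with
  | zero => intro i _; exact ⟨SimpleGraph.Walk.nil, by
      intro z hz; simp at hz; exact ⟨i, by omega, hz.symm⟩⟩
  | succ d ih =>
    intro i hm
    obtain ⟨w, hw⟩ := ih (i+1) (by omega)
    have he : i + 1 + d = i + (d + 1) := by omega
    refine ⟨SimpleGraph.Walk.cons (hadj i (by omega)) (w.copy rfl (by rw [he])), ?_⟩
    intro z hz
    rw [SimpleGraph.Walk.support_cons, SimpleGraph.Walk.support_copy] at hz
    rcases List.mem_cons.mp hz with h | h
    · exact ⟨i, by omega, h.symm⟩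
    · exact hw z h

/-- reachability within the vertex set of a path seq -/
lemma walk_in_seq (f : ℕ → V) (m : ℕ) (hadj : ∀ i < m, G.Adj (f i) (f (i+1)))
    (r s : V) (hr : ∃ i ≤ m, f i = r) (hs : ∃ i ≤ m, f i = s) :
    ∃ w : G.Walk r s, ∀ z ∈ w.support, ∃ j ≤ m, f j = z := by
  obtain ⟨i, hi, rfl⟩ := hr
  obtain ⟨j, hj, rfl⟩ := hs
  rcases le_total i j with h | h
  · obtain ⟨w, hw⟩ := walk_along f m hadj (j - i) i (by omega)
    refine ⟨w.copy rfl (by rw [show i + (j-i) = j by omega]), ?_⟩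
    intro z hz; rw [SimpleGraph.Walk.support_copy] at hz; exact hw z hz
  · obtain ⟨w, hw⟩ := walk_along f m hadj (i - j) j (by omega)
    refine ⟨(w.copy rfl (by rw [show j + (i-j) = i by omega])).reverse, ?_⟩
    intro z hz
    rw [SimpleGraph.Walk.support_reverse, SimpleGraph.Walk.support_copy] at hz
    exact hw z (List.mem_reverse.mp hz)


variable {T : SimpleGraph V}


/-- hom from induced subgraph into the graph -/
def indHom (T : SimpleGraph V) (S : Set V) : (T.induce S) →g T :=
  ⟨Subtype.val, fun {a b} h => h⟩

lemma indHom_inj (S : Set V) : Function.Injective (indHom T S) := Subtype.val_injective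

/-- vertex set of a connected component of T minus R, as a subset of V -/
def Sc (T : SimpleGraph V) (R : Set V) (c : (T.induce Rᶜ).ConnectedComponent) : Set V :=
  Subtype.val '' c.supp

lemma mem_Sc {R : Set V} {c : (T.induce Rᶜ).ConnectedComponent} {v : V} :
    v ∈ Sc T R c ↔ ∃ h : v ∈ Rᶜ, (T.induce Rᶜ).connectedComponentMk ⟨v, h⟩ = c := by
  constructor
  · rintro ⟨⟨w, hw⟩, hsupp, rfl⟩
    exact ⟨hw, (ConnectedComponent.mem_supp_iff _ _).mp hsupp⟩
  · rintro ⟨h, hc⟩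
    exact ⟨⟨v, h⟩, (ConnectedComponent.mem_supp_iff _ _).mpr hc, rfl⟩

lemma Sc_subset {R : Set V} (c : (T.induce Rᶜ).ConnectedComponent) : Sc T R c ⊆ Rᶜ := by
  rintro v hv; exact (mem_Sc.mp hv).1

lemma Sc_disjoint {R : Set V} {c c' : (T.induce Rᶜ).ConnectedComponent} (h : c ≠ c') :
    Disjoint (Sc T R c) (Sc T R c') := by
  rw [Set.disjoint_left]
  rintro v hv hv'
  obtain ⟨h1, hc⟩ := mem_Sc.mp hv
  obtain ⟨h2, hc'⟩ := mem_Sc.mp hv'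
  exact h (hc ▸ hc' ▸ rfl)

lemma adj_same_comp {R : Set V} {c c' : (T.induce Rᶜ).ConnectedComponent} {v w : V}
    (hv : v ∈ Sc T R c) (hw : w ∈ Sc T R c') (hadj : T.Adj v w) : c = c' := by
  obtain ⟨h1, hc⟩ := mem_Sc.mp hv
  obtain ⟨h2, hc'⟩ := mem_Sc.mp hw
  have : (T.induce Rᶜ).Adj ⟨v, h1⟩ ⟨w, h2⟩ := hadj
  rw [← hc, ← hc']
  exact ConnectedComponent.connectedComponentMk_eq_of_adj this

/-- transfer a walk in an induced subgraph into a larger induced subgraph -/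
lemma reachable_transfer {S S' : Set V} {x y : ↥S} (p : (T.induce S).Walk x y)
    (hs : ∀ z ∈ p.support, (z : V) ∈ S') :
    ∀ (hx : ↑x ∈ S') (hy : ↑y ∈ S'), (T.induce S').Reachable ⟨↑x, hx⟩ ⟨↑y, hy⟩ := by
  induction p with
  | nil => intro hx hy; exact Reachable.refl _
  | @cons a b w h q ih =>
    intro hx hy
    have hb : (b : V) ∈ S' := hs b (by rw [Walk.support_cons]; exact List.mem_cons_of_mem _ q.start_mem_support)
    have hadj : (T.induce S').Adj ⟨↑a, hx⟩ ⟨↑b, hb⟩ := h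
    exact hadj.reachable.trans (ih (fun z hz => hs z (by rw [Walk.support_cons]; exact List.mem_cons_of_mem _ hz)) hb hy)

/-- every support vertex of a walk in `T.induce Rᶜ` starting in comp c lies in comp c -/
lemma comp_connected {R : Set V} (c : (T.induce Rᶜ).ConnectedComponent) :
    (T.induce (Sc T R c)).Connected := by
  classical
  obtain ⟨z0, hz0⟩ := c.exists_rep
  have hz0' : (z0 : V) ∈ Sc T R c := mem_Sc.mpr ⟨z0.2, hz0⟩
  rw [connected_iff]
  refine ⟨?_, ⟨⟨_, hz0'⟩⟩⟩
  intro ⟨a, ha⟩ ⟨b, hb⟩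
  obtain ⟨ha', hca⟩ := mem_Sc.mp ha
  obtain ⟨hb', hcb⟩ := mem_Sc.mp hb
  have : (T.induce Rᶜ).Reachable ⟨a, ha'⟩ ⟨b, hb'⟩ :=
    ConnectedComponent.exact (hca.trans hcb.symm)
  obtain ⟨p⟩ := this
  have hsup : ∀ z ∈ p.support, (z : V) ∈ Sc T R c := by
    intro z hz
    refine mem_Sc.mpr ⟨z.2, ?_⟩
    have : (T.induce Rᶜ).Reachable z ⟨b, hb'⟩ := (p.dropUntil z hz).reachable
    have := ConnectedComponent.sound this
    rw [show (⟨(z : V), z.2⟩ : ↥Rᶜ) = z from rfl, this, hcb]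
  exact reachable_transfer p hsup ha hb

lemma induce_acyclic (hT : T.IsAcyclic) (S : Set V) : (T.induce S).IsAcyclic := by
  intro v p hp
  have : (p.map (indHom T S)).IsCycle :=
    (Walk.map_isCycle_iff_of_injective (indHom_inj S)).mpr hp
  exact hT _ this

lemma comp_isTree (hT : T.IsTree) {R : Set V} (c : (T.induce Rᶜ).ConnectedComponent) :
    (T.induce (Sc T R c)).IsTree :=
  ⟨comp_connected c, induce_acyclic hT.2 _⟩

/-- existence of an attachment vertex -/
lemma exists_attach_walk {R : Set V} :
    ∀ {a b : V} (_ : T.Walk a b), a ∉ R → b ∈ R →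
    ∃ (v r : V) (hv : v ∉ R), r ∈ R ∧ T.Adj v r ∧
      ∀ (ha : a ∉ R), (T.induce Rᶜ).Reachable ⟨a, ha⟩ ⟨v, hv⟩ := by
  intro a b w
  induction w with
  | nil => intro ha hb; exact absurd hb ha
  | @cons a a1 b h q ih =>
    intro ha hb
    by_cases h1 : a1 ∈ R
    · exact ⟨a, a1, ha, h1, h, fun ha' => Reachable.refl _⟩
    · obtain ⟨v, r, hv, hr, hadj, hreach⟩ := ih h1 hb
      refine ⟨v, r, hv, hr, hadj, fun ha' => ?_⟩
      have hstep : (T.induce Rᶜ).Adj ⟨a, ha'⟩ ⟨a1, h1⟩ := h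
      exact hstep.reachable.trans (hreach h1)

lemma attach_exists (hT : T.IsTree) {R : Set V} (u0 : V) (hu0 : u0 ∈ R)
    (c : (T.induce Rᶜ).ConnectedComponent) :
    ∃ v ∈ Sc T R c, ∃ r ∈ R, T.Adj v r := by
  obtain ⟨z0, hz0⟩ := c.exists_rep
  obtain ⟨w⟩ := hT.1.preconnected (z0 : V) u0
  obtain ⟨v, r, hv, hr, hadj, hreach⟩ := exists_attach_walk w z0.2 hu0
  refine ⟨v, ?_, r, hr, hadj⟩
  refine mem_Sc.mpr ⟨hv, ?_⟩
  rw [← hz0]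
  exact (ConnectedComponent.sound (hreach z0.2)).symm

/-- uniqueness of the attachment vertex -/
lemma attach_unique (hT : T.IsTree) {R : Set V}
    (hRwalk : ∀ r s : V, r ∈ R → s ∈ R → ∃ w : T.Walk r s, ∀ z ∈ w.support, z ∈ R)
    {c : (T.induce Rᶜ).ConnectedComponent} {v w r s : V}
    (hv : v ∈ Sc T R c) (hw : w ∈ Sc T R c) (hr : r ∈ R) (hs : s ∈ R)
    (hadj1 : T.Adj v r) (hadj2 : T.Adj w s) : v = w := by
  classical
  -- path from v to w inside Rᶜ
  obtain ⟨hv', hcv⟩ := mem_Sc.mp hv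
  obtain ⟨hw', hcw⟩ := mem_Sc.mp hw
  obtain ⟨p0⟩ := ConnectedComponent.exact (hcv.trans hcw.symm)
  set pC : T.Walk v w := (p0.toPath : (T.induce Rᶜ).Path _ _).1.map (indHom T Rᶜ) with hpC
  have hpC_path : pC.IsPath := Walk.map_isPath_of_injective (indHom_inj _) (p0.toPath.2)
  have hpC_sup : ∀ z ∈ pC.support, z ∉ R := by
    intro z hz
    have key : ∀ {a b : ↥Rᶜ} (q : (T.induce Rᶜ).Walk a b),
        z ∈ (q.map (indHom T Rᶜ)).support → z ∉ R := by
      intro a b q hq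
      rw [Walk.support_map] at hq
      obtain ⟨z', _, rfl⟩ := List.mem_map.mp hq
      exact z'.2
    exact key _ hz
  -- path from r to s inside R
  obtain ⟨wR, hwR⟩ := hRwalk r s hr hs
  set pR : T.Walk r s := wR.toPath.1 with hpR
  have hpR_path : pR.IsPath := wR.toPath.2
  have hpR_sup : ∀ z ∈ pR.support, z ∈ R := fun z hz => hwR z (Walk.support_toPath_subset wR hz)
  -- two paths from s to v
  have hsv : s ∉ pC.support := fun h => hpC_sup s h hs
  have hvR : v ∉ pR.support := fun h => (Sc_subset c hv) (hpR_sup v h)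
  set q1 : T.Walk s v := Walk.cons hadj2.symm pC.reverse with hq1
  have hq1_path : q1.IsPath := by
    rw [hq1, Walk.cons_isPath_iff]
    exact ⟨hpC_path.reverse, by rwa [Walk.support_reverse, List.mem_reverse]⟩
  set q2 : T.Walk s v := (Walk.cons hadj1 pR).reverse with hq2
  have hq2_path : q2.IsPath := by
    rw [hq2]
    apply Walk.IsPath.reverse
    rw [Walk.cons_isPath_iff]
    exact ⟨hpR_path, hvR⟩
  have heq : q1 = q2 := (hT.existsUnique_path s v).unique hq1_path hq2_path
  by_contra hne
  have hg1 : q1.getVert 1 = w := by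
    rw [hq1, Walk.getVert_cons_succ, Walk.getVert_zero]
  have hg2 : q2.getVert 1 ∈ R ∨ q2.getVert 1 = v := by
    have he : q2.getVert 1 = (Walk.cons hadj1 pR).getVert ((Walk.cons hadj1 pR).length - 1) := by
      rw [hq2, Walk.getVert_reverse]
    rcases Nat.eq_zero_or_pos pR.length with h0 | h0
    · right
      rw [he]
      simp [Walk.length_cons, h0, Walk.getVert_zero]
    · left
      rw [he]
      have h1 : (Walk.cons hadj1 pR).length - 1 = (pR.length - 1) + 1 := by
        simp [Walk.length_cons]; omega
      rw [h1, Walk.getVert_cons_succ]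
      apply hpR_sup
      rw [Walk.mem_support_iff_exists_getVert]
      exact ⟨pR.length - 1, rfl, Nat.sub_le _ _⟩

  rw [heq] at hg1
  rcases hg2 with h | h
  · exact (Sc_subset c hw) (hg1 ▸ h)
  · exact hne (hg1 ▸ h).symm


section Glue
variable {V : Type} (T : SimpleGraph V) (R : Set V)
variable (κ : (T.induce Rᶜ).ConnectedComponent → Type)
variable (PP : ∀ c, PathPartition (T.induce (Sc T R c)) (κ c))

/-- index type of the glued partition -/
abbrev gIdx : Type := Option ((c : (T.induce Rᶜ).ConnectedComponent) × κ c)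

/-- pieces of the glued partition -/
def gP : gIdx T R κ → Set V
  | none => R
  | some ⟨c, x⟩ => Subtype.val '' ((PP c).P x)

/-- the glued rooted tree -/
def gQ : SimpleGraph (gIdx T R κ) where
  Adj x y := x ≠ y ∧ ∃ a ∈ gP T R κ PP x, ∃ b ∈ gP T R κ PP y, T.Adj a b
  symm := ⟨by rintro x y ⟨hne, a, ha, b, hb, hadj⟩; exact ⟨hne.symm, b, hb, a, ha, hadj.symm⟩⟩
  loopless := ⟨fun x h => h.1 rfl⟩

variable {T R κ PP}

lemma gP_some_subset {c : (T.induce Rᶜ).ConnectedComponent} {x : κ c} :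
    gP T R κ PP (some ⟨c, x⟩) ⊆ Sc T R c := by
  rintro v ⟨v', _, rfl⟩; exact v'.2

lemma gQ_same_comp {c c' : (T.induce Rᶜ).ConnectedComponent} {x : κ c} {y : κ c'}
    (hadj : (gQ T R κ PP).Adj (some ⟨c, x⟩) (some ⟨c', y⟩)) : c = c' := by
  obtain ⟨-, a, ha, b, hb, hadj⟩ := hadj
  exact adj_same_comp (gP_some_subset ha) (gP_some_subset hb) hadj

lemma gQ_adj_some_iff {c : (T.induce Rᶜ).ConnectedComponent} {x y : κ c} :
    (gQ T R κ PP).Adj (some ⟨c, x⟩) (some ⟨c, y⟩) ↔ (PP c).Q.Adj x y := by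
  constructor
  · rintro ⟨hne, a, ha, b, hb, hadj⟩
    obtain ⟨a', ha', rfl⟩ := ha
    obtain ⟨b', hb', rfl⟩ := hb
    have hxy : x ≠ y := by rintro rfl; exact hne rfl
    have : (T.induce (Sc T R c)).Adj a' b' := hadj
    exact ((PP c).adj_iff x y).mpr ⟨hxy, a', ha', b', hb', this⟩
  · intro hadj
    obtain ⟨hxy, a', ha', b', hb', hadj'⟩ := ((PP c).adj_iff x y).mp hadj
    refine ⟨?_, ↑a', ⟨a', ha', rfl⟩, ↑b', ⟨b', hb', rfl⟩, hadj'⟩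
    intro hcon
    apply hxy
    have := Option.some_injective _ hcon
    rw [Sigma.mk.inj_iff] at this
    exact eq_of_heq this.2

lemma gQ_adj_none_iff (hT : T.IsTree) (u0 : V) (hu0 : u0 ∈ R)
    (hatt : ∀ c (v : ↥(Sc T R c)), (∃ r ∈ R, T.Adj ↑v r) → v ∈ (PP c).P (PP c).root)
    {c : (T.induce Rᶜ).ConnectedComponent} {x : κ c} :
    (gQ T R κ PP).Adj none (some ⟨c, x⟩) ↔ x = (PP c).root := by
  constructor
  · rintro ⟨hne, a, ha, b, hb, hadj⟩
    obtain ⟨b', hb', rfl⟩ := hb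
    have hroot : b' ∈ (PP c).P (PP c).root := hatt c b' ⟨a, ha, hadj.symm⟩
    by_contra hxr
    exact Set.disjoint_left.mp ((PP c).disjoint x (PP c).root hxr) hb' hroot
  · rintro rfl
    obtain ⟨v, hv, r, hr, hadj⟩ := attach_exists hT u0 hu0 c
    have hv' : (⟨v, hv⟩ : ↥(Sc T R c)) ∈ (PP c).P (PP c).root := hatt c ⟨v, hv⟩ ⟨r, hr, hadj⟩
    exact ⟨by simp, r, hr, v, ⟨⟨v, hv⟩, hv', rfl⟩, hadj.symm⟩

/-- hom from a component partition tree to the glued tree -/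
def gHom (c : (T.induce Rᶜ).ConnectedComponent) : (PP c).Q →g gQ T R κ PP where
  toFun x := some ⟨c, x⟩
  map_rel' := fun h => gQ_adj_some_iff.mpr h

lemma gHom_inj (c : (T.induce Rᶜ).ConnectedComponent) :
    Function.Injective (gHom (PP := PP) c) := by
  intro a b hab
  have := Option.some_injective _ hab
  rw [Sigma.mk.inj_iff] at this
  exact eq_of_heq this.2

lemma gQ_comp_const : ∀ {a b : gIdx T R κ} (W : (gQ T R κ PP).Walk a b),
    none ∉ W.support → ∀ (p q : (c : (T.induce Rᶜ).ConnectedComponent) × κ c),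
      a = some p → b = some q → p.1 = q.1 := by
  intro a b W
  induction W with
  | nil => rintro _ p q rfl hpq; rw [Option.some_injective _ hpq]
  | @cons a a' b h W ih =>
    intro hn p q ha hb
    have hn' : none ∉ W.support := fun hc => hn (by rw [SimpleGraph.Walk.support_cons]; exact List.mem_cons_of_mem _ hc)
    have ha' : a' ≠ none := by
      rintro rfl
      exact hn (by rw [SimpleGraph.Walk.support_cons]; exact List.mem_cons_of_mem _ W.start_mem_support)
    obtain ⟨p', rfl⟩ := Option.ne_none_iff_exists'.mp ha'
    subst ha; subst hb
    have h1 : p.1 = p'.1 := by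
      obtain ⟨c, x⟩ := p; obtain ⟨c', x'⟩ := p'
      exact gQ_same_comp h
    rw [h1]
    exact ih hn' p' q rfl rfl

lemma gQ_walk_lift : ∀ {a b : gIdx T R κ} (W : (gQ T R κ PP).Walk a b),
    none ∉ W.support → ∀ (c : (T.induce Rᶜ).ConnectedComponent) (x y : κ c)
      (ha : a = some ⟨c, x⟩) (hb : b = some ⟨c, y⟩),
      ∃ W' : (PP c).Q.Walk x y, W.copy ha hb = W'.map (gHom c) := by
  intro a b W
  induction W with
  | nil =>
    rintro _ c x y rfl hb
    have hxy : x = y := by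
      have := Option.some_injective _ hb
      rw [Sigma.mk.inj_iff] at this
      exact eq_of_heq this.2
    subst hxy
    exact ⟨SimpleGraph.Walk.nil, by simp [SimpleGraph.Walk.copy_rfl_rfl]; rfl⟩
  | @cons a a' b h W ih =>
    rintro hn c x y rfl hb
    have hn' : none ∉ W.support := fun hc => hn (by rw [SimpleGraph.Walk.support_cons]; exact List.mem_cons_of_mem _ hc)
    have ha' : a' ≠ none := by
      rintro rfl
      exact hn (by rw [SimpleGraph.Walk.support_cons]; exact List.mem_cons_of_mem _ W.start_mem_support)
    obtain ⟨⟨c', x'⟩, rfl⟩ := Option.ne_none_iff_exists'.mp ha'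
    have hcc : c = c' := gQ_same_comp h
    subst hcc
    have hadj : (PP c).Q.Adj x x' := gQ_adj_some_iff.mp h
    obtain ⟨W', hW'⟩ := ih hn' c x' y rfl hb
    refine ⟨SimpleGraph.Walk.cons hadj W', ?_⟩
    rw [SimpleGraph.Walk.copy_cons, SimpleGraph.Walk.map_cons, hW']
    rfl

lemma gQ_no_cycle_at_none (hT : T.IsTree) (u0 : V) (hu0 : u0 ∈ R)
    (hatt : ∀ c (v : ↥(Sc T R c)), (∃ r ∈ R, T.Adj ↑v r) → v ∈ (PP c).P (PP c).root) :
    ∀ (W : (gQ T R κ PP).Walk none none), ¬ W.IsCycle := by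
  intro W hW
  have h3 := hW.three_le_length
  cases W with
  | nil => simp at h3
  | @cons _ a₁ _ h₁ W₁ =>
    have hp1 : W₁.IsPath := ((SimpleGraph.Walk.cons_isCycle_iff _ _).mp hW).1
    have ha₁ : a₁ ≠ none := h₁.ne'
    obtain ⟨⟨c₁, x₁⟩, rfl⟩ := Option.ne_none_iff_exists'.mp ha₁
    have hx₁ : x₁ = (PP c₁).root := (gQ_adj_none_iff hT u0 hu0 hatt).mp h₁
    -- decompose the reverse of W₁
    have hner : (none : gIdx T R κ) ≠ some ⟨c₁, x₁⟩ := by simp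
    obtain ⟨b₁, hadj', W₂, hdecomp⟩ := SimpleGraph.Walk.exists_eq_cons_of_ne hner W₁.reverse
    have hp1r : W₁.reverse.IsPath := hp1.reverse
    rw [hdecomp, SimpleGraph.Walk.cons_isPath_iff] at hp1r
    have hb₁ : b₁ ≠ none := hadj'.ne'
    obtain ⟨⟨c₂, x₂⟩, rfl⟩ := Option.ne_none_iff_exists'.mp hb₁
    have hx₂ : x₂ = (PP c₂).root := (gQ_adj_none_iff hT u0 hu0 hatt).mp hadj'
    have hcc : c₂ = c₁ := gQ_comp_const W₂ hp1r.2 ⟨c₂, x₂⟩ ⟨c₁, x₁⟩ rfl rfl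
    subst hcc
    -- W₂ is a path from some ⟨c₂, x₂⟩ to some ⟨c₂, x₁⟩ but these are equal
    have hx12 : x₂ = x₁ := by rw [hx₂, hx₁]
    subst hx12
    -- so W₂ is a closed path, hence nil
    have hW₂nil : W₂ = SimpleGraph.Walk.nil := by
      have : (⟨W₂, hp1r.1⟩ : (gQ T R κ PP).Path _ _) = SimpleGraph.Path.nil :=
        SimpleGraph.Path.loop_eq _
      exact congrArg Subtype.val this
    have hlen : W₁.length = 1 := by
      have := congrArg SimpleGraph.Walk.length hdecomp
      rw [SimpleGraph.Walk.length_reverse, SimpleGraph.Walk.length_cons, hW₂nil] at this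
      simpa using this
    rw [SimpleGraph.Walk.length_cons, hlen] at h3
    omega

lemma gQ_isTree (hT : T.IsTree) (u0 : V) (hu0 : u0 ∈ R)
    (hatt : ∀ c (v : ↥(Sc T R c)), (∃ r ∈ R, T.Adj ↑v r) → v ∈ (PP c).P (PP c).root) :
    (gQ T R κ PP).IsTree := by
  constructor
  · rw [SimpleGraph.connected_iff]
    refine ⟨?_, ⟨none⟩⟩
    have key : ∀ x : gIdx T R κ, (gQ T R κ PP).Reachable x none := by
      intro x
      match x with
      | none => exact SimpleGraph.Reachable.refl _
      | some ⟨c, x⟩ =>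
        have h1 : (PP c).Q.Reachable x (PP c).root := (PP c).isTree.1.preconnected x _
        have h2 := h1.map (gHom (PP := PP) c)
        refine h2.trans ?_
        have := (gQ_adj_none_iff hT u0 hu0 hatt (c := c) (x := (PP c).root)).mpr rfl
        exact this.symm.reachable
    intro x y
    exact (key x).trans (key y).symm
  · intro v W hW
    classical
    by_cases hnone : none ∈ W.support
    · exact gQ_no_cycle_at_none hT u0 hu0 hatt _ (hW.rotate hnone)
    · have hv : v ≠ none := fun hc => hnone (hc ▸ W.start_mem_support)
      obtain ⟨⟨c, x⟩, rfl⟩ := Option.ne_none_iff_exists'.mp hv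
      obtain ⟨W', hW'⟩ := gQ_walk_lift W hnone c x x rfl rfl
      rw [SimpleGraph.Walk.copy_rfl_rfl] at hW'
      rw [hW'] at hW
      exact (PP c).isTree.2 _ ((SimpleGraph.Walk.map_isCycle_iff_of_injective (gHom_inj c)).mp hW)

lemma gQ_dist_le (hT : T.IsTree) (u0 : V) (hu0 : u0 ∈ R) (h : ℕ)
    (hatt : ∀ c (v : ↥(Sc T R c)), (∃ r ∈ R, T.Adj ↑v r) → v ∈ (PP c).P (PP c).root)
    (hheight : ∀ c x, (PP c).Q.dist (PP c).root x ≤ h) :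
    ∀ x, (gQ T R κ PP).dist none x ≤ h + 1 := by
  intro x
  match x with
  | none => simp [SimpleGraph.dist_self]
  | some ⟨c, x⟩ =>
    obtain ⟨p, hp⟩ := (PP c).isTree.1.exists_walk_length_eq_dist (PP c).root x
    have hadj : (gQ T R κ PP).Adj none (some ⟨c, (PP c).root⟩) :=
      (gQ_adj_none_iff hT u0 hu0 hatt).mpr rfl
    have : (gQ T R κ PP).dist none (some ⟨c, x⟩) ≤
        (SimpleGraph.Walk.cons hadj (p.map (gHom (PP := PP) c))).length :=
      SimpleGraph.dist_le _
    have hl : (SimpleGraph.Walk.cons hadj (p.map (gHom (PP := PP) c))).length = p.length + 1 :=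
      congrArg (· + 1) (SimpleGraph.Walk.length_map _ p)
    rw [hl, hp] at this
    have := hheight c x
    omega

end Glue

/-- The main gluing lemma: a path `R` through a tree, plus partitions of the components
of its complement rooted at their attachment vertices, glue to a partition of `T`. -/
lemma glue {V : Type} {T : SimpleGraph V} (hT : T.IsTree) (m₀ : ℕ) (f : ℕ → V)
    (hf : IsPathSeq T f m₀)
    (R : Set V) (hR : R = {v | ∃ i ≤ m₀, f i = v}) (h : ℕ)
    (κ : (T.induce Rᶜ).ConnectedComponent → Type)
    (PP : ∀ c, PathPartition (T.induce (Sc T R c)) (κ c))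
    (hheight : ∀ c x, (PP c).Q.dist (PP c).root x ≤ h)
    (hatt : ∀ c (v : ↥(Sc T R c)), (∃ r ∈ R, T.Adj ↑v r) → v ∈ (PP c).P (PP c).root) :
    ∃ (ι : Type) (PPT : PathPartition T ι),
      (∀ x, PPT.Q.dist PPT.root x ≤ h + 1) ∧ PPT.P PPT.root = R := by
  classical
  have hu0 : f 0 ∈ R := by rw [hR]; exact ⟨0, Nat.zero_le _, rfl⟩
  refine ⟨gIdx T R κ, ⟨gQ T R κ PP, none, gQ_isTree hT (f 0) hu0 hatt, gP T R κ PP,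
    ?_, ?_, ?_, fun x y => Iff.rfl⟩,
    gQ_dist_le hT (f 0) hu0 h hatt hheight, rfl⟩
  · -- disjointness
    intro x y hxy
    match x, y with
    | none, none => exact absurd rfl hxy
    | none, some ⟨c, z⟩ =>
      rw [Set.disjoint_left]
      intro a ha ha'
      exact (Sc_subset c (gP_some_subset ha')) ha
    | some ⟨c, z⟩, none =>
      rw [Set.disjoint_right]
      intro a ha ha'
      exact (Sc_subset c (gP_some_subset ha')) ha
    | some ⟨c, z⟩, some ⟨c', z'⟩ =>
      by_cases hcc : c = c'
      · subst hcc
        have hzz : z ≠ z' := by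
          rintro rfl; exact hxy rfl
        exact Set.disjoint_image_of_injective Subtype.val_injective ((PP c).disjoint z z' hzz)
      · exact Set.disjoint_of_subset gP_some_subset gP_some_subset (Sc_disjoint hcc)
  · -- cover
    intro v
    by_cases hv : v ∈ R
    · exact ⟨none, hv⟩
    · have hv' : v ∈ Rᶜ := hv
      set c := (T.induce Rᶜ).connectedComponentMk ⟨v, hv'⟩ with hc
      have hSc : v ∈ Sc T R c := mem_Sc.mpr ⟨hv', rfl⟩
      obtain ⟨x, hx⟩ := (PP c).cover ⟨v, hSc⟩
      exact ⟨some ⟨c, x⟩, ⟨⟨v, hSc⟩, hx, rfl⟩⟩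
  · -- isPath
    intro x
    match x with
    | none => exact ⟨m₀, f, hf, hR⟩
    | some ⟨c, z⟩ =>
      obtain ⟨m, g, hg, hPeq⟩ := (PP c).isPath z
      refine ⟨m, fun i => ↑(g i), ⟨?_, ?_⟩, ?_⟩
      · intro i j hi hj hval
        exact hg.1 i j hi hj (Subtype.val_injective hval)
      · intro i hi
        exact hg.2 i hi
      · show Subtype.val '' ((PP c).P z) = _
        rw [hPeq]
        ext v
        constructor
        · rintro ⟨v', ⟨i, hi, rfl⟩, rfl⟩; exact ⟨i, hi, rfl⟩
        · rintro ⟨i, hi, rfl⟩; exact ⟨g i, ⟨i, hi, rfl⟩, rfl⟩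

section Decomp
variable {V : Type} {T : SimpleGraph V} {m : ℕ}

/-- the bags of a connected path sequence sweep an interval: any bag index `j` between
a bag of `f a` and a bag of `f b` contains some vertex of the sequence -/
lemma seq_cross (B : Fin m → Finset V) (hB : IsPathDecomp T B) [Fintype V]
    (f : ℕ → V) (m₀ : ℕ) (hadj : ∀ i < m₀, T.Adj (f i) (f (i + 1)))
    (j : Fin m) (a b : ℕ) (ha : a ≤ m₀) (hb : b ≤ m₀)
    (ja : ∃ j' : Fin m, j' ≤ j ∧ f a ∈ B j') (jb : ∃ j' : Fin m, j ≤ j' ∧ f b ∈ B j') :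
    ∃ i ≤ m₀, f i ∈ B j := by
  classical
  have hne : ∀ v, (Finset.univ.filter (fun i : Fin m => v ∈ B i)).Nonempty := by
    intro v
    obtain ⟨i, hi⟩ := hB.1 v
    exact ⟨i, by simp [hi]⟩
  set F : ℕ → ℕ := fun i => ((Finset.univ.filter (fun i' : Fin m => f i ∈ B i')).min' (hne _) : ℕ) with hF
  set L : ℕ → ℕ := fun i => ((Finset.univ.filter (fun i' : Fin m => f i ∈ B i')).max' (hne _) : ℕ) with hL
  have memF : ∀ i, f i ∈ B ((Finset.univ.filter (fun i' : Fin m => f i ∈ B i')).min' (hne _)) := by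
    intro i
    exact (Finset.mem_filter.mp (Finset.min'_mem _ (hne (f i)))).2
  have memL : ∀ i, f i ∈ B ((Finset.univ.filter (fun i' : Fin m => f i ∈ B i')).max' (hne _)) := by
    intro i
    exact (Finset.mem_filter.mp (Finset.max'_mem _ (hne (f i)))).2
  have hFle : ∀ i (j' : Fin m), f i ∈ B j' → F i ≤ (j' : ℕ) := by
    intro i j' hj'
    have := Finset.min'_le (Finset.univ.filter (fun i' : Fin m => f i ∈ B i')) j' (by rw [Finset.mem_filter]; exact ⟨Finset.mem_univ _, hj'⟩)
    exact Fin.le_def.mp this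
  have hLge : ∀ i (j' : Fin m), f i ∈ B j' → (j' : ℕ) ≤ L i := by
    intro i j' hj'
    have := Finset.le_max' (Finset.univ.filter (fun i' : Fin m => f i ∈ B i')) j' (by rw [Finset.mem_filter]; exact ⟨Finset.mem_univ _, hj'⟩)
    exact Fin.le_def.mp this
  have hbetween : ∀ i (j' : Fin m), F i ≤ (j' : ℕ) → (j' : ℕ) ≤ L i → f i ∈ B j' := by
    intro i j' h1 h2
    exact hB.2.1 (f i) _ j' _ (Fin.le_def.mpr h1) (Fin.le_def.mpr h2) (memF i) (memL i)
  have hov1 : ∀ i, i < m₀ → F (i + 1) ≤ L i := by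
    intro i hi
    obtain ⟨j', hj1, hj2⟩ := hB.2.2 _ _ (hadj i hi)
    exact le_trans (hFle (i+1) j' hj2) (hLge i j' hj1)
  have hov2 : ∀ i, i < m₀ → F i ≤ L (i + 1) := by
    intro i hi
    obtain ⟨j', hj1, hj2⟩ := hB.2.2 _ _ (hadj i hi)
    exact le_trans (hFle i j' hj1) (hLge (i+1) j' hj2)
  obtain ⟨j1, hj1le, hj1mem⟩ := ja
  obtain ⟨j2, hj2le, hj2mem⟩ := jb
  have hFa : F a ≤ (j : ℕ) := le_trans (hFle a j1 hj1mem) hj1le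
  have hLb : (j : ℕ) ≤ L b := le_trans hj2le (hLge b j2 hj2mem)
  obtain ⟨i, him, hFi, hLi⟩ := cross_any F L m₀ (j : ℕ) hov1 hov2 a b ha hb hFa hLb
  exact ⟨i, him, hbetween i j hFi hLi⟩

/-- restriction of a path decomposition to an induced subgraph -/
lemma restrict_decomp (B : Fin m → Finset V) (hB : IsPathDecomp T B)
    (S : Set V) [DecidablePred (· ∈ S)] :
    IsPathDecomp (T.induce S) (fun j => (B j).subtype (· ∈ S)) := by
  refine ⟨?_, ?_, ?_⟩
  · intro v
    obtain ⟨i, hi⟩ := hB.1 (v : V)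
    exact ⟨i, Finset.mem_subtype.mpr hi⟩
  · intro v i j' k' h1 h2 hi hk
    exact Finset.mem_subtype.mpr (hB.2.1 (v : V) i j' k' h1 h2
      (Finset.mem_subtype.mp hi) (Finset.mem_subtype.mp hk))
  · intro a b hadj
    obtain ⟨i, hi1, hi2⟩ := hB.2.2 (a : V) (b : V) hadj
    exact ⟨i, Finset.mem_subtype.mpr hi1, Finset.mem_subtype.mpr hi2⟩

lemma card_subtype_le (s : Finset V) (S : Set V) [DecidablePred (· ∈ S)] :
    (s.subtype (· ∈ S)).card ≤ s.card := by
  rw [Finset.card_subtype]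
  exact Finset.card_filter_le _ _

lemma card_subtype_lt (s : Finset V) (S : Set V) [DecidablePred (· ∈ S)]
    {r : V} (hr : r ∈ s) (hrS : r ∉ S) :
    (s.subtype (· ∈ S)).card ≤ s.card - 1 := by
  classical
  rw [Finset.card_subtype]
  have hsub : s.filter (· ∈ S) ⊆ s.erase r := by
    intro x hx
    rw [Finset.mem_filter] at hx
    exact Finset.mem_erase.mpr ⟨fun hc => hrS (by rw [← hc]; exact hx.2), hx.1⟩
  calc (s.filter (· ∈ S)).card ≤ (s.erase r).card := Finset.card_le_card hsub
    _ = s.card - 1 := Finset.card_erase_of_mem hr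

end Decomp

/-- the statement proved for "threshold" decompositions (M') -/
def MpStmt (n : ℕ) : Prop :=
  ∀ (V : Type), Finite V → ∀ (T : SimpleGraph V), T.IsTree → Nat.card V ≤ n →
    ∀ (u : V) (k m t : ℕ) (B : Fin m → Finset V), IsPathDecomp T B →
      (∀ j, (B j).card ≤ k + 1) → (∀ j : Fin m, t ≤ (j : ℕ) → (B j).card ≤ k) →
      (∃ j : Fin m, t ≤ (j : ℕ) ∧ u ∈ B j) →
      ∃ (ι : Type) (PP : PathPartition T ι),
        (∀ x, PP.Q.dist PP.root x ≤ 2 * k - 1) ∧ u ∈ PP.P PP.root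

/-- the unconstrained statement (M) -/
def MqStmt (n : ℕ) : Prop :=
  ∀ (V : Type), Finite V → ∀ (T : SimpleGraph V), T.IsTree → Nat.card V ≤ n →
    ∀ (u : V) (k m : ℕ) (B : Fin m → Finset V), IsPathDecomp T B →
      (∀ j, (B j).card ≤ k + 1) →
      ∃ (ι : Type) (PP : PathPartition T ι),
        (∀ x, PP.Q.dist PP.root x ≤ 2 * k) ∧ u ∈ PP.P PP.root

lemma trivial_partition {V : Type} (T : SimpleGraph V) (hT : T.IsTree) (u : V)
    (hE : ∀ a b : V, ¬ T.Adj a b) :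
    ∃ (ι : Type) (PP : PathPartition T ι),
      (∀ x, PP.Q.dist PP.root x ≤ 0) ∧ u ∈ PP.P PP.root := by
  have hall : ∀ v : V, v = u := by
    intro v
    obtain ⟨w⟩ := hT.1.preconnected v u
    cases w with
    | nil => rfl
    | cons h _ => exact absurd h (hE _ _)
  refine ⟨Unit, ⟨⊥, ⟨⟩, ⟨?_, ?_⟩, fun _ => Set.univ, ?_, fun v => ⟨⟨⟩, trivial⟩, ?_, ?_⟩,
    ?_, trivial⟩
  · rw [SimpleGraph.connected_iff]
    exact ⟨fun a b => by cases a; cases b; exact SimpleGraph.Reachable.refl _, ⟨⟨⟩⟩⟩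
  · intro v W hW
    cases W with
    | nil => simpa using hW.three_le_length
    | cons h _ => exact h.elim
  · intro x y hxy; exact absurd (Subsingleton.elim x y) hxy
  · intro x
    refine ⟨0, fun _ => u, ⟨fun i j hi hj _ => by omega, fun i hi => by omega⟩, ?_⟩
    ext v
    simp only [Set.mem_univ, Set.mem_setOf_eq, true_iff]
    exact ⟨0, le_refl 0, (hall v).symm⟩
  · intro x y
    constructor
    · intro h; exact h.elim
    · rintro ⟨hxy, _⟩; exact absurd (Subsingleton.elim x y) hxy
  · intro x
    have : x = () := rfl
    simp [SimpleGraph.dist_self]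

lemma mq_of_mp (n : ℕ) (ih : ∀ n' < n, MpStmt n') : MqStmt n := by
  intro V hVfin T hT hcard u k m B hB hw
  classical
  have hVfin' := hVfin
  have : Fintype V := Fintype.ofFinite V
  -- the k = 0 case : no edges at all
  rcases Nat.eq_zero_or_pos k with hk0 | hkpos
  · subst hk0
    refine trivial_partition T hT u ?_
    intro a b hadj
    obtain ⟨j, hj1, hj2⟩ := hB.2.2 a b hadj
    have h2 : 1 < (B j).card := Finset.one_lt_card.mpr ⟨a, hj1, b, hj2, hadj.ne⟩
    have := hw j
    omega
  -- k ≥ 1 : main construction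
  have hn1 : 1 ≤ n := by
    have : Nonempty V := ⟨u⟩
    have : 0 < Nat.card V := Nat.card_pos
    omega
  -- bag interval functions
  have hneBag : ∀ v : V, (Finset.univ.filter (fun i : Fin m => v ∈ B i)).Nonempty := by
    intro v
    obtain ⟨i, hi⟩ := hB.1 v
    exact ⟨i, by rw [Finset.mem_filter]; exact ⟨Finset.mem_univ _, hi⟩⟩
  set bmin : V → Fin m := fun v => (Finset.univ.filter (fun i : Fin m => v ∈ B i)).min' (hneBag v) with hbmin
  set bmax : V → Fin m := fun v => (Finset.univ.filter (fun i : Fin m => v ∈ B i)).max' (hneBag v) with hbmax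
  have hmem_min : ∀ v, v ∈ B (bmin v) := fun v =>
    (Finset.mem_filter.mp (Finset.min'_mem _ (hneBag v))).2
  have hmem_max : ∀ v, v ∈ B (bmax v) := fun v =>
    (Finset.mem_filter.mp (Finset.max'_mem _ (hneBag v))).2
  have hmin_le : ∀ v (j : Fin m), v ∈ B j → bmin v ≤ j := fun v j hj =>
    Finset.min'_le _ j (by rw [Finset.mem_filter]; exact ⟨Finset.mem_univ _, hj⟩)
  have hle_max : ∀ v (j : Fin m), v ∈ B j → j ≤ bmax v := fun v j hj =>
    Finset.le_max' _ j (by rw [Finset.mem_filter]; exact ⟨Finset.mem_univ _, hj⟩)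
  -- choose b maximizing bmax
  obtain ⟨bb, -, hbbmax⟩ := Finset.exists_max_image Finset.univ (fun v => (bmax v : ℕ))
    ⟨u, Finset.mem_univ u⟩
  -- path from u to bb
  obtain ⟨w0⟩ := hT.1.preconnected u bb
  set p : T.Walk u bb := w0.toPath.1 with hpdef
  have hppath : p.IsPath := w0.toPath.2
  set f : ℕ → V := p.getVert with hfdef
  set m₀ : ℕ := p.length with hm₀
  have hfseq : IsPathSeq T f m₀ := isPathSeq_of_path p hppath
  set R : Set V := {v | ∃ i ≤ m₀, f i = v} with hRdef
  have huR : u ∈ R := ⟨0, Nat.zero_le _, p.getVert_zero⟩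
  have hfm₀ : f m₀ = bb := p.getVert_length
  -- the threshold
  obtain ⟨im, himr, himmin⟩ := Finset.exists_min_image (Finset.range (m₀ + 1))
    (fun i => (bmin (f i) : ℕ)) ⟨0, by simp⟩
  set t : ℕ := (bmin (f im) : ℕ) with htdef
  have him : im ≤ m₀ := by
    rw [Finset.mem_range] at himr; omega
  -- occupied bags at indices ≥ t meet R
  have key1 : ∀ j : Fin m, t ≤ (j : ℕ) → (B j).Nonempty → ∃ i ≤ m₀, f i ∈ B j := by
    rintro j hjt ⟨v, hv⟩
    refine seq_cross B hB f m₀ hfseq.2 j im m₀ him le_rfl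
      ⟨bmin (f im), Fin.le_def.mpr hjt, hmem_min _⟩
      ⟨bmax (f m₀), ?_, hmem_max _⟩
    rw [Fin.le_def, hfm₀]
    calc (j : ℕ) ≤ (bmax v : ℕ) := Fin.le_def.mp (hle_max v j hv)
      _ ≤ (bmax bb : ℕ) := hbbmax v (Finset.mem_univ v)
  -- component partitions
  have hRwalk : ∀ r s : V, r ∈ R → s ∈ R → ∃ w : T.Walk r s, ∀ z ∈ w.support, z ∈ R :=
    fun r s hr hs => walk_in_seq f m₀ hfseq.2 r s hr hs
  have hex : ∀ c : (T.induce Rᶜ).ConnectedComponent,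
      ∃ (κc : Type) (PPc : PathPartition (T.induce (Sc T R c)) κc),
        (∀ x, PPc.Q.dist PPc.root x ≤ 2 * k - 1) ∧
        (∀ v : ↥(Sc T R c), (∃ r ∈ R, T.Adj ↑v r) → v ∈ PPc.P PPc.root) := by
    intro c
    obtain ⟨vc, hvcSc, rc, hrcR, hadjc⟩ := attach_exists hT u huR c
    -- its attachment bag index is ≥ t
    obtain ⟨j₀, hj₀v, hj₀r⟩ := hB.2.2 vc rc hadjc
    have hj₀t : t ≤ (j₀ : ℕ) := by
      obtain ⟨i, hi, hfi⟩ := hrcR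
      have h1 : (bmin (f i) : ℕ) ≤ (j₀ : ℕ) := by
        rw [hfi]; exact Fin.le_def.mp (hmin_le rc j₀ hj₀r)
      have h2 : t ≤ (bmin (f i) : ℕ) := himmin i (Finset.mem_range.mpr (by omega))
      omega
    -- restricted decomposition
    set B' : Fin m → Finset ↥(Sc T R c) := fun j => (B j).subtype (· ∈ Sc T R c) with hB'def
    have hB' : IsPathDecomp (T.induce (Sc T R c)) B' := restrict_decomp B hB _
    have hw1' : ∀ j, (B' j).card ≤ k + 1 := fun j =>
      le_trans (card_subtype_le _ _) (hw j)
    have hw2' : ∀ j : Fin m, t ≤ (j : ℕ) → (B' j).card ≤ k := by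
      intro j hjt
      rcases Finset.eq_empty_or_nonempty (B' j) with he | ⟨x, hx⟩
      · rw [he]; simp
      · have hBne : (B j).Nonempty := ⟨(x : V), Finset.mem_subtype.mp hx⟩
        obtain ⟨i, hi, hfi⟩ := key1 j hjt hBne
        have hfR : f i ∈ R := ⟨i, hi, rfl⟩
        have hfnotS : f i ∉ Sc T R c := fun hc => (Sc_subset c hc) hfR
        have h3 : (B' j).card ≤ (B j).card - 1 := card_subtype_lt (B j) (Sc T R c) hfi hfnotS
        have := hw j
        omega
    have hub' : ∃ j : Fin m, t ≤ (j : ℕ) ∧ (⟨vc, hvcSc⟩ : ↥(Sc T R c)) ∈ B' j :=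
      ⟨j₀, hj₀t, Finset.mem_subtype.mpr hj₀v⟩
    -- cardinality decreases
    have hcard_c : Nat.card ↥(Sc T R c) ≤ n - 1 := by
      have hne_univ : Sc T R c ≠ Set.univ := by
        intro hcon
        have : u ∈ Sc T R c := hcon ▸ Set.mem_univ u
        exact (Sc_subset c this) huR
      have hss : Sc T R c ⊂ Set.univ := Set.ssubset_univ_iff.mpr hne_univ
      have h1 : (Sc T R c).ncard < (Set.univ : Set V).ncard :=
        Set.ncard_lt_ncard hss Set.finite_univ
      rw [Set.ncard_univ] at h1
      rw [Nat.card_coe_set_eq]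
      omega
    obtain ⟨ιc, PPc, hhc, hrc⟩ := ih (n - 1) (by omega) (↥(Sc T R c)) inferInstance
      (T.induce (Sc T R c)) (comp_isTree hT c) hcard_c ⟨vc, hvcSc⟩ k m t B' hB' hw1' hw2' hub'
    refine ⟨ιc, PPc, hhc, ?_⟩
    rintro v ⟨r, hrR, hadj⟩
    have hveq : (v : V) = vc :=
      attach_unique hT hRwalk v.2 hvcSc hrR hrcR hadj hadjc
    have : v = ⟨vc, hvcSc⟩ := Subtype.ext hveq
    rw [this]
    exact hrc
  choose κ PPc hh hroot using hex
  obtain ⟨ι, PPT, hd, hPeq⟩ := glue hT m₀ f hfseq R hRdef (2 * k - 1) κ PPc hh hroot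
  refine ⟨ι, PPT, ?_, by rw [hPeq]; exact huR⟩
  intro x
  have := hd x
  omega


lemma mp_all : ∀ n, MpStmt n := by
  intro n
  induction n using Nat.strong_induction_on with
  | _ n ih =>
  intro V hVfin T hT hcard u k m t B hB hw hwt hub
  classical
  have : Fintype V := Fintype.ofFinite V
  obtain ⟨jstar, hjst, hju⟩ := hub
  have hkpos : 1 ≤ k := by
    have h1 : 0 < (B jstar).card := Finset.card_pos.mpr ⟨u, hju⟩
    have := hwt jstar hjst
    omega
  have hn1 : 1 ≤ n := by
    have : Nonempty V := ⟨u⟩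
    have : 0 < Nat.card V := Nat.card_pos
    omega
  have hneBag : ∀ v : V, (Finset.univ.filter (fun i : Fin m => v ∈ B i)).Nonempty := by
    intro v
    obtain ⟨i, hi⟩ := hB.1 v
    exact ⟨i, by rw [Finset.mem_filter]; exact ⟨Finset.mem_univ _, hi⟩⟩
  set bmin : V → Fin m := fun v => (Finset.univ.filter (fun i : Fin m => v ∈ B i)).min' (hneBag v) with hbmin
  have hmem_min : ∀ v, v ∈ B (bmin v) := fun v =>
    (Finset.mem_filter.mp (Finset.min'_mem _ (hneBag v))).2
  have hmin_le : ∀ v (j : Fin m), v ∈ B j → bmin v ≤ j := fun v j hj =>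
    Finset.min'_le _ j (by rw [Finset.mem_filter]; exact ⟨Finset.mem_univ _, hj⟩)
  -- choose c0 minimizing bmin
  obtain ⟨c0, -, hc0min⟩ := Finset.exists_min_image Finset.univ (fun v => (bmin v : ℕ))
    ⟨u, Finset.mem_univ u⟩
  -- path from u to c0
  obtain ⟨w0⟩ := hT.1.preconnected u c0
  set p : T.Walk u c0 := w0.toPath.1 with hpdef
  have hppath : p.IsPath := w0.toPath.2
  set f : ℕ → V := p.getVert with hfdef
  set m₀ : ℕ := p.length with hm₀
  have hfseq : IsPathSeq T f m₀ := isPathSeq_of_path p hppath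
  set R : Set V := {v | ∃ i ≤ m₀, f i = v} with hRdef
  have hf0 : f 0 = u := p.getVert_zero
  have huR : u ∈ R := ⟨0, Nat.zero_le _, hf0⟩
  have hfm₀ : f m₀ = c0 := p.getVert_length
  -- occupied bags at indices < t meet R
  have key2 : ∀ j : Fin m, (j : ℕ) < t → (B j).Nonempty → ∃ i ≤ m₀, f i ∈ B j := by
    rintro j hjt ⟨v, hv⟩
    refine seq_cross B hB f m₀ hfseq.2 j m₀ 0 le_rfl (Nat.zero_le _)
      ⟨bmin (f m₀), ?_, hmem_min _⟩
      ⟨jstar, ?_, by rw [hf0]; exact hju⟩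
    · rw [Fin.le_def, hfm₀]
      calc (bmin c0 : ℕ) ≤ (bmin v : ℕ) := hc0min v (Finset.mem_univ v)
        _ ≤ (j : ℕ) := Fin.le_def.mp (hmin_le v j hv)
    · rw [Fin.le_def]; omega
  have hRwalk : ∀ r s : V, r ∈ R → s ∈ R → ∃ w : T.Walk r s, ∀ z ∈ w.support, z ∈ R :=
    fun r s hr hs => walk_in_seq f m₀ hfseq.2 r s hr hs
  have hex : ∀ c : (T.induce Rᶜ).ConnectedComponent,
      ∃ (κc : Type) (PPc : PathPartition (T.induce (Sc T R c)) κc),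
        (∀ x, PPc.Q.dist PPc.root x ≤ 2 * (k - 1)) ∧
        (∀ v : ↥(Sc T R c), (∃ r ∈ R, T.Adj ↑v r) → v ∈ PPc.P PPc.root) := by
    intro c
    obtain ⟨vc, hvcSc, rc, hrcR, hadjc⟩ := attach_exists hT u huR c
    set B' : Fin m → Finset ↥(Sc T R c) := fun j => (B j).subtype (· ∈ Sc T R c) with hB'def
    have hB' : IsPathDecomp (T.induce (Sc T R c)) B' := restrict_decomp B hB _
    have hw1' : ∀ j, (B' j).card ≤ (k - 1) + 1 := by
      intro j
      rcases le_or_gt t (j : ℕ) with hjt | hjt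
      · have h1 : (B' j).card ≤ (B j).card := card_subtype_le _ _
        have := hwt j hjt
        omega
      · rcases Finset.eq_empty_or_nonempty (B' j) with he | ⟨x, hx⟩
        · rw [he]; simp
        · have hBne : (B j).Nonempty := ⟨(x : V), Finset.mem_subtype.mp hx⟩
          obtain ⟨i, hi, hfi⟩ := key2 j hjt hBne
          have hfR : f i ∈ R := ⟨i, hi, rfl⟩
          have hfnotS : f i ∉ Sc T R c := fun hc => (Sc_subset c hc) hfR
          have h3 : (B' j).card ≤ (B j).card - 1 :=
            card_subtype_lt (B j) (Sc T R c) hfi hfnotS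
          have := hw j
          omega
    have hcard_c : Nat.card ↥(Sc T R c) ≤ n - 1 := by
      have hne_univ : Sc T R c ≠ Set.univ := by
        intro hcon
        have : u ∈ Sc T R c := hcon ▸ Set.mem_univ u
        exact (Sc_subset c this) huR
      have hss : Sc T R c ⊂ Set.univ := Set.ssubset_univ_iff.mpr hne_univ
      have h1 : (Sc T R c).ncard < (Set.univ : Set V).ncard :=
        Set.ncard_lt_ncard hss Set.finite_univ
      rw [Set.ncard_univ] at h1
      rw [Nat.card_coe_set_eq]
      omega
    obtain ⟨ιc, PPc, hhc, hrc⟩ := mq_of_mp (n - 1) (fun n' hn' => ih n' (by omega))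
      (↥(Sc T R c)) inferInstance (T.induce (Sc T R c)) (comp_isTree hT c) hcard_c
      ⟨vc, hvcSc⟩ (k - 1) m B' hB' hw1'
    refine ⟨ιc, PPc, hhc, ?_⟩
    rintro v ⟨r, hrR, hadj⟩
    have hveq : (v : V) = vc :=
      attach_unique hT hRwalk v.2 hvcSc hrR hrcR hadj hadjc
    have : v = ⟨vc, hvcSc⟩ := Subtype.ext hveq
    rw [this]
    exact hrc
  choose κ PPc hh hroot using hex
  obtain ⟨ι, PPT, hd, hPeq⟩ := glue hT m₀ f hfseq R hRdef (2 * (k - 1)) κ PPc hh hroot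
  refine ⟨ι, PPT, ?_, by rw [hPeq]; exact huR⟩
  intro x
  have := hd x
  omega

end Stmt6

/-- For every finite tree `T` of pathwidth `k` and every vertex `u` of `T`, there is a
path-partition of `T` of height at most `2k` in which `u` belongs to the root-path. -/
theorem stmt6 {V : Type} (hV : Finite V) (T : SimpleGraph V) (hT : T.IsTree)
    (k : ℕ) (hpw : pathwidth T = k) (u : V) :
    ∃ (ι : Type) (PP : PathPartition T ι),
      (∀ x : ι, PP.Q.dist PP.root x ≤ 2 * k) ∧ u ∈ PP.P PP.root := by
  classical
  have : Fintype V := Fintype.ofFinite V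
  have hne : {k' | PathwidthLE T k'}.Nonempty := by
    refine ⟨Fintype.card V, 1, fun _ => Finset.univ, ⟨?_, ?_, ?_⟩, ?_⟩
    · exact fun v => ⟨0, Finset.mem_univ v⟩
    · exact fun v i j k' _ _ _ _ => Finset.mem_univ v
    · exact fun a b _ => ⟨0, Finset.mem_univ a, Finset.mem_univ b⟩
    · intro i
      rw [Finset.card_univ]
      omega
  have hmem : PathwidthLE T k := by
    have := Nat.sInf_mem hne
    rw [← hpw]
    exact this
  obtain ⟨m, B, hB, hw⟩ := hmem
  exact Stmt6.mq_of_mp (Nat.card V) (fun n' _ => Stmt6.mp_all n') V hV T hT le_rfl u k m B hB hw
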